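/- Let 𝔓 := 𝔅 ∘ 𝔅* : L²(ℝ⁵) → L²(ℝ⁵), where 𝔅* is the Hilbert-space adjoint of the isometric extension of the partial Bargmann transform 𝔅. Then 𝔓 acts fiberwise in the variable η: for every v ∈ L²(ℝ⁵) and every measurable set S ⊆ ℝ, if v(w,ξ,η) = 0 for almost every (w,ξ,η) with η ∉ S, then also (𝔓v)(w,ξ,η) = 0 for almost every (w,ξ,η) with η ∉ S. -/

import Mathlib

/-!
The Bargmann projector `𝔓 = 𝔅 ∘ 𝔅*` acts fiberwise in the frequency variable `η`.
-/

open MeasureTheory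

noncomputable section

/-- Points of the plane `ℝ²`. -/
abbrev V2 : Type := ℝ × ℝ

/-- The Euclidean dot product on `ℝ²`. -/
def dot2 (a b : V2) : ℝ := a.1 * b.1 + a.2 * b.2

/-- The squared Euclidean norm on `ℝ²`. -/
def sq2 (a : V2) : ℝ := a.1 ^ 2 + a.2 ^ 2

/-- The wave packet `φ_{w,ξ,η}(w',z') = 2^{-3/2} π^{-2} ⟨η⟩^{1/2}
    exp( iηz' + iξ·(w' − w/2) − ⟨η⟩‖w' − w‖²/2 )`, where `jb` plays the role of `⟨·⟩`. -/
def wp (jb : ℝ → ℝ) (w ξ : V2) (η : ℝ) (w' : V2) (z' : ℝ) : ℂ :=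
  (((2 : ℝ) ^ (-(3 : ℝ) / 2) * Real.pi ^ (-(2 : ℝ)) * Real.sqrt (jb η) : ℝ) : ℂ) *
    Complex.exp (Complex.I * (η : ℂ) * (z' : ℂ)
      + Complex.I * ((dot2 ξ (w' - (1 / 2 : ℝ) • w) : ℝ) : ℂ)
      - ((jb η * sq2 (w' - w) / 2 : ℝ) : ℂ))

/-- The partial Bargmann transform `𝔅u(w,ξ,η) = ∫ conj(φ_{w,ξ,η}(w',z')) u(w',z') dw' dz'`. -/
def pB (jb : ℝ → ℝ) (u : V2 × ℝ → ℂ) : (V2 × V2) × ℝ → ℂ := fun p =>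
  ∫ q : V2 × ℝ, (starRingEnd ℂ) (wp jb p.1.1 p.1.2 p.2 q.1 q.2) * u q

section Aux

open Complex FourierTransform ComplexConjugate ContDiff

/-! ### Auxiliary: Fourier uniqueness on `L¹(ℝ)` -/

/-- A smooth compactly supported real function, seen as a complex-valued Schwartz function. -/
def bpfToSchw {g : ℝ → ℝ} (hg : ContDiff ℝ ∞ g) (hsupp : HasCompactSupport g) :
    SchwartzMap ℝ ℂ := by
  refine ⟨fun x => (g x : ℂ), Complex.ofRealCLM.contDiff.comp hg, ?_⟩
  intro k n
  have hcd : ContDiff ℝ ∞ (fun x => (g x : ℂ)) := Complex.ofRealCLM.contDiff.comp hg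
  have hsupp2 : HasCompactSupport (fun x => (g x : ℂ)) := by
    apply hsupp.comp_left (g := fun y : ℝ => (y : ℂ)); simp
  have h1 : HasCompactSupport (fun x : ℝ => ‖iteratedFDeriv ℝ n (fun x => (g x : ℂ)) x‖) :=
    (hsupp2.iteratedFDeriv n).comp_left (g := fun y => ‖y‖) norm_zero
  have h1' : HasCompactSupport
      (fun x : ℝ => ‖x‖ ^ k * ‖iteratedFDeriv ℝ n (fun x => (g x : ℂ)) x‖) := h1.mul_left
  have h2 : Continuous (fun x : ℝ => ‖x‖ ^ k * ‖iteratedFDeriv ℝ n (fun x => (g x : ℂ)) x‖) :=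
    ((continuous_norm.pow k)).mul (hcd.continuous_iteratedFDeriv (mod_cast le_top)).norm
  obtain ⟨C, hC⟩ := h1'.exists_bound_of_continuous h2
  exact ⟨C, fun x => (le_abs_self _).trans ((Real.norm_eq_abs _) ▸ hC x)⟩

lemma bpfToSchw_apply {g : ℝ → ℝ} (hg : ContDiff ℝ ∞ g) (hsupp : HasCompactSupport g) (x : ℝ) :
    bpfToSchw hg hsupp x = (g x : ℂ) := rfl

/-- An integrable function on `ℝ` whose Fourier transform vanishes is a.e. zero. -/
lemma bpf_fourier_zero_ae {h : ℝ → ℂ} (hh : Integrable h)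
    (H : ∀ a : ℝ, ∫ η : ℝ, Complex.exp (-(Complex.I * a * η)) * h η = 0) :
    h =ᵐ[volume] 0 := by
  have hF : ∀ t : ℝ, 𝓕 h t = 0 := by
    intro t
    rw [Real.fourier_real_eq_integral_exp_smul]
    rw [← H (2 * Real.pi * t)]
    congr 1 with v
    rw [smul_eq_mul]
    congr 2
    push_cast
    ring
  apply ae_eq_zero_of_integral_contDiff_smul_eq_zero hh.locallyIntegrable
  intro g hg hgsupp
  set G : SchwartzMap ℝ ℂ := bpfToSchw hg hgsupp with hG
  set ψ : SchwartzMap ℝ ℂ := (SchwartzMap.fourierTransformCLE ℂ (SchwartzMap ℝ ℂ)).symm G with hψ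
  have hFψ : 𝓕 ⇑ψ = ⇑G := by
    have := (SchwartzMap.fourierTransformCLE ℂ (SchwartzMap ℝ ℂ)).apply_symm_apply G
    rw [← hψ] at this
    rw [← this]; rfl
  have flip := VectorFourier.integral_fourierIntegral_smul_eq_flip
    (L := innerₗ ℝ) (μ := (volume : Measure ℝ)) (ν := (volume : Measure ℝ))
    (f := ⇑ψ) (g := h) Real.continuous_fourierChar continuous_inner ψ.integrable hh
  have hLflip : (innerₗ ℝ).flip = innerₗ ℝ := by
    apply LinearMap.ext; intro x; apply LinearMap.ext; intro y
    simp [real_inner_comm]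
  rw [hLflip] at flip
  have hfun : (fun x : ℝ => g x • h x) = fun ξ : ℝ => (𝓕 ⇑ψ) ξ • h ξ := by
    rw [hFψ]
    funext x
    rw [bpfToSchw_apply hg hgsupp]
    simp [Complex.real_smul]
  rw [show (∫ x : ℝ, g x • h x) = ∫ ξ : ℝ, (𝓕 ⇑ψ) ξ • h ξ from by rw [hfun]]
  have flip' : ∫ ξ, (𝓕 ⇑ψ) ξ • h ξ = ∫ x, ψ x • (𝓕 h) x := flip
  rw [flip']
  simp [hF]

/-! ### Auxiliary: translation covariance of the partial Bargmann transform -/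

lemma bpf_wp_shift (jb : ℝ → ℝ) (w ξ : V2) (η : ℝ) (w' : V2) (z' a : ℝ) :
    wp jb w ξ η w' (z' + a) = Complex.exp (Complex.I * η * a) * wp jb w ξ η w' z' := by
  unfold wp
  have he : Complex.exp (Complex.I * (η : ℂ) * ((z' + a : ℝ) : ℂ)
      + Complex.I * ((dot2 ξ (w' - (1 / 2 : ℝ) • w) : ℝ) : ℂ)
      - ((jb η * sq2 (w' - w) / 2 : ℝ) : ℂ))
      = Complex.exp (Complex.I * η * a) * Complex.exp (Complex.I * (η : ℂ) * (z' : ℂ)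
      + Complex.I * ((dot2 ξ (w' - (1 / 2 : ℝ) • w) : ℝ) : ℂ)
      - ((jb η * sq2 (w' - w) / 2 : ℝ) : ℂ)) := by
    rw [← Complex.exp_add]
    congr 1
    push_cast
    ring
  rw [he]
  ring

lemma bpf_pB_shift (jb : ℝ → ℝ) (u : V2 × ℝ → ℂ) (a : ℝ) (p : (V2 × V2) × ℝ) :
    pB jb (fun q => u (q.1, q.2 - a)) p
      = Complex.exp (-(Complex.I * p.2 * a)) * pB jb u p := by
  unfold pB
  have hmp : MeasurePreserving (fun q : V2 × ℝ => (q.1, q.2 + a)) volume volume := by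
    rw [Measure.volume_eq_prod]
    exact (MeasurePreserving.id volume).prod (measurePreserving_add_right volume a)
  have hemb : MeasurableEmbedding (fun q : V2 × ℝ => (q.1, q.2 + a)) :=
    ((Homeomorph.refl V2).prodCongr (Homeomorph.addRight a)).measurableEmbedding
  rw [← hmp.integral_comp hemb]
  have key : ∀ q : V2 × ℝ,
      (starRingEnd ℂ) (wp jb p.1.1 p.1.2 p.2 q.1 (q.2 + a)) * u (q.1, q.2 + a - a)
        = Complex.exp (-(Complex.I * p.2 * a)) *
          ((starRingEnd ℂ) (wp jb p.1.1 p.1.2 p.2 q.1 q.2) * u q) := by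
    intro q
    rw [add_sub_cancel_right, bpf_wp_shift, map_mul, ← Complex.exp_conj]
    have hc : (starRingEnd ℂ) (Complex.I * p.2 * a) = -(Complex.I * p.2 * a) := by
      simp only [map_mul, Complex.conj_I, Complex.conj_ofReal]
      ring
    rw [hc, mul_assoc]
  simp only [key]
  rw [integral_const_mul]

end Aux

end

noncomputable section McSection

open ComplexConjugate

/-- The bad band `{p | p.2 ∉ S}` in `ℝ⁵`. -/
def bpfBand (S : Set ℝ) : Set ((V2 × V2) × ℝ) := Prod.snd ⁻¹' Sᶜ

lemma bpfBand_meas (S : Set ℝ) (hS : MeasurableSet S) : MeasurableSet (bpfBand S) :=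
  (hS.compl).preimage measurable_snd

/-- Multiplication by the indicator of the bad band, as a map on `L²(ℝ⁵)`. -/
def bpfMc (S : Set ℝ) (hS : MeasurableSet S)
    (x : Lp ℂ 2 (volume : Measure ((V2 × V2) × ℝ))) :
    Lp ℂ 2 (volume : Measure ((V2 × V2) × ℝ)) :=
  ((Lp.memLp x).indicator (bpfBand_meas S hS)).toLp ((bpfBand S).indicator ⇑x)

lemma bpfMc_coe (S : Set ℝ) (hS : MeasurableSet S)
    (x : Lp ℂ 2 (volume : Measure ((V2 × V2) × ℝ))) :
    ⇑(bpfMc S hS x) =ᵐ[volume] (bpfBand S).indicator ⇑x :=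
  MemLp.coeFn_toLp _

lemma bpfMc_inner_left (S : Set ℝ) (hS : MeasurableSet S)
    (x z : Lp ℂ 2 (volume : Measure ((V2 × V2) × ℝ))) :
    (inner ℂ (bpfMc S hS x) z : ℂ)
      = ∫ p, (bpfBand S).indicator (fun p => conj (x p) * z p) p := by
  rw [L2.inner_def]
  apply integral_congr_ae
  filter_upwards [bpfMc_coe S hS x] with p hp
  rw [RCLike.inner_apply', hp]
  by_cases h : p ∈ bpfBand S
  · simp [Set.indicator_of_mem h]
  · simp [Set.indicator_of_notMem h]

lemma bpfMc_inner_right (S : Set ℝ) (hS : MeasurableSet S)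
    (x z : Lp ℂ 2 (volume : Measure ((V2 × V2) × ℝ))) :
    (inner ℂ x (bpfMc S hS z) : ℂ)
      = ∫ p, (bpfBand S).indicator (fun p => conj (x p) * z p) p := by
  rw [L2.inner_def]
  apply integral_congr_ae
  filter_upwards [bpfMc_coe S hS z] with p hp
  rw [RCLike.inner_apply', hp]
  by_cases h : p ∈ bpfBand S
  · simp [Set.indicator_of_mem h]
  · simp [Set.indicator_of_notMem h]

lemma bpfMc_inner_symm (S : Set ℝ) (hS : MeasurableSet S)
    (x z : Lp ℂ 2 (volume : Measure ((V2 × V2) × ℝ))) :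
    (inner ℂ (bpfMc S hS x) z : ℂ) = inner ℂ x (bpfMc S hS z) := by
  rw [bpfMc_inner_left, bpfMc_inner_right]

lemma bpfMc_sub (S : Set ℝ) (hS : MeasurableSet S)
    (x z : Lp ℂ 2 (volume : Measure ((V2 × V2) × ℝ))) :
    bpfMc S hS (x - z) = bpfMc S hS x - bpfMc S hS z := by
  apply Lp.ext
  have h1 := bpfMc_coe S hS (x - z)
  have h2 := bpfMc_coe S hS x
  have h3 := bpfMc_coe S hS z
  have h4 := Lp.coeFn_sub (bpfMc S hS x) (bpfMc S hS z)
  have h5 := Lp.coeFn_sub x z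
  filter_upwards [h1, h2, h3, h4, h5] with p hp1 hp2 hp3 hp4 hp5
  rw [hp1, hp4, Pi.sub_apply, hp2, hp3]
  by_cases h : p ∈ bpfBand S
  · simp only [Set.indicator_of_mem h, hp5, Pi.sub_apply]
  · simp [Set.indicator_of_notMem h]

lemma bpfMc_idem (S : Set ℝ) (hS : MeasurableSet S)
    (x : Lp ℂ 2 (volume : Measure ((V2 × V2) × ℝ))) :
    bpfMc S hS (bpfMc S hS x) = bpfMc S hS x := by
  apply Lp.ext
  have h1 := bpfMc_coe S hS (bpfMc S hS x)
  have h2 := bpfMc_coe S hS x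
  filter_upwards [h1, h2] with p hp1 hp2
  rw [hp1]
  by_cases h : p ∈ bpfBand S
  · simp [Set.indicator_of_mem h, hp2]
  · simp [Set.indicator_of_notMem h, hp2]

lemma bpfMc_norm_le (S : Set ℝ) (hS : MeasurableSet S)
    (x : Lp ℂ 2 (volume : Measure ((V2 × V2) × ℝ))) :
    ‖bpfMc S hS x‖ ≤ ‖x‖ := by
  rw [bpfMc, Lp.norm_toLp, Lp.norm_def]
  apply ENNReal.toReal_mono (Lp.eLpNorm_ne_top x)
  exact eLpNorm_indicator_le _

end McSection
noncomputable section CoreSection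

open Complex ComplexConjugate

/-- The analytic core: if `y` is orthogonal to the range of `B`, then for every nice `u`, the
band-restriction of `B u` is still orthogonal to `y`. -/
lemma bpf_core (jb : ℝ → ℝ)
    (B : Lp ℂ 2 (volume : Measure (V2 × ℝ)) →ₗᵢ[ℂ]
      Lp ℂ 2 (volume : Measure ((V2 × V2) × ℝ)))
    (hB : ∀ (u : V2 × ℝ → ℂ), Continuous u → HasCompactSupport u →
      ∀ hu2 : MemLp u 2 (volume : Measure (V2 × ℝ)),
        ⇑(B (hu2.toLp u)) =ᵐ[volume] pB jb u)
    (S : Set ℝ) (hS : MeasurableSet S)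
    (y : Lp ℂ 2 (volume : Measure ((V2 × V2) × ℝ)))
    (hy : ∀ x : Lp ℂ 2 (volume : Measure (V2 × ℝ)), (inner ℂ (B x) y : ℂ) = 0)
    (u : V2 × ℝ → ℂ) (hu_cont : Continuous u) (hu_supp : HasCompactSupport u)
    (hu2 : MemLp u 2 (volume : Measure (V2 × ℝ))) :
    (inner ℂ y (bpfMc S hS (B (hu2.toLp u))) : ℂ) = 0 := by
  set z := B (hu2.toLp u) with hz
  set g : (V2 × V2) × ℝ → ℂ := fun p => conj (y p) * z p with hgdef
  have hg : Integrable g := by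
    simpa only [RCLike.inner_apply'] using L2.integrable_inner (𝕜 := ℂ) y z
  set h : ℝ → ℂ := fun η => ∫ ω : V2 × V2, g (ω, η) with hhdef
  have hgprod : Integrable g ((volume : Measure (V2 × V2)).prod (volume : Measure ℝ)) := by
    rwa [← Measure.volume_eq_prod]
  have hh : Integrable h := hgprod.integral_prod_right
  -- the Fourier transform of `h` vanishes
  have H : ∀ a : ℝ, ∫ η : ℝ, Complex.exp (-(Complex.I * a * η)) * h η = 0 := by
    intro a
    set ua : V2 × ℝ → ℂ := fun q => u (q.1, q.2 - a) with huadef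
    have hua_cont : Continuous ua :=
      hu_cont.comp (continuous_fst.prodMk (continuous_snd.sub continuous_const))
    have hua_supp : HasCompactSupport ua :=
      hu_supp.comp_homeomorph ((Homeomorph.refl V2).prodCongr (Homeomorph.subRight a))
    have hua2 : MemLp ua 2 (volume : Measure (V2 × ℝ)) :=
      hua_cont.memLp_of_hasCompactSupport hua_supp
    have key : ⇑(B (hua2.toLp ua)) =ᵐ[volume]
        fun p => Complex.exp (-(Complex.I * p.2 * a)) * z p := by
      filter_upwards [hB ua hua_cont hua_supp hua2, hB u hu_cont hu_supp hu2] with p hp1 hp2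
      rw [hp1]
      have := bpf_pB_shift jb u a p
      rw [huadef] at *
      rw [this, hp2]
    have inner0 : (inner ℂ y (B (hua2.toLp ua)) : ℂ) = 0 := by
      rw [← inner_conj_symm, hy _, map_zero]
    have inner_eq : (inner ℂ y (B (hua2.toLp ua)) : ℂ)
        = ∫ p, Complex.exp (-(Complex.I * p.2 * a)) * g p := by
      rw [L2.inner_def]
      apply integral_congr_ae
      filter_upwards [key] with p hp
      rw [RCLike.inner_apply', hp, hgdef]
      ring
    have Hp : ∫ p, Complex.exp (-(Complex.I * p.2 * a)) * g p = 0 := by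
      rw [← inner_eq, inner0]
    -- integrability of the twisted integrand
    have hE_cont : Continuous (fun p : (V2 × V2) × ℝ => Complex.exp (-(Complex.I * p.2 * a))) := by
      fun_prop
    have hE_bdd : ∀ p : (V2 × V2) × ℝ, ‖Complex.exp (-(Complex.I * p.2 * a))‖ ≤ 1 := by
      intro p
      rw [Complex.norm_exp]
      simp
    have hint : Integrable (fun p => Complex.exp (-(Complex.I * p.2 * a)) * g p) :=
      hg.bdd_mul (c := 1) hE_cont.aestronglyMeasurable (Filter.Eventually.of_forall hE_bdd)
    have hintprod : Integrable (fun p => Complex.exp (-(Complex.I * p.2 * a)) * g p)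
        ((volume : Measure (V2 × V2)).prod (volume : Measure ℝ)) := by
      rwa [← Measure.volume_eq_prod]
    calc ∫ η : ℝ, Complex.exp (-(Complex.I * a * η)) * h η
        = ∫ η : ℝ, Complex.exp (-(Complex.I * η * a)) * h η := by
          congr 1 with η
          rw [show -(Complex.I * a * η) = -(Complex.I * η * a) from by ring]
      _ = ∫ η : ℝ, ∫ ω : V2 × V2, Complex.exp (-(Complex.I * η * a)) * g (ω, η) := by
          congr 1 with η
          rw [integral_const_mul]
      _ = ∫ p : (V2 × V2) × ℝ, Complex.exp (-(Complex.I * p.2 * a)) * g p := by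
          rw [Measure.volume_eq_prod (V2 × V2) ℝ]
          exact (integral_prod_symm _ hintprod).symm
      _ = 0 := Hp
  have hzero : h =ᵐ[volume] 0 := bpf_fourier_zero_ae hh H
  -- conclude
  rw [bpfMc_inner_right]
  have hindint : Integrable ((bpfBand S).indicator g) := hg.indicator (bpfBand_meas S hS)
  have hindprod : Integrable ((bpfBand S).indicator g)
      ((volume : Measure (V2 × V2)).prod (volume : Measure ℝ)) := by
    rwa [← Measure.volume_eq_prod]
  have step : ∫ p, (bpfBand S).indicator g p = ∫ η : ℝ, Sᶜ.indicator h η := by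
    rw [Measure.volume_eq_prod (V2 × V2) ℝ, integral_prod_symm _ hindprod]
    congr 1 with η
    by_cases hη : η ∈ Sᶜ
    · have hmem : ∀ ω : V2 × V2, (ω, η) ∈ bpfBand S := fun ω => hη
      rw [Set.indicator_of_mem hη]
      simp only [Set.indicator_of_mem (hmem _)]
      rfl
    · have hmem : ∀ ω : V2 × V2, (ω, η) ∉ bpfBand S := fun ω => hη
      rw [Set.indicator_of_notMem hη]
      simp only [Set.indicator_of_notMem (hmem _)]
      simp
  rw [hgdef] at step
  rw [step]
  have : Sᶜ.indicator h =ᵐ[volume] 0 := by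
    filter_upwards [hzero] with η hη
    by_cases hmem : η ∈ Sᶜ
    · simp [Set.indicator_of_mem hmem, hη]
    · simp [Set.indicator_of_notMem hmem]
  rw [integral_congr_ae this]
  simp

end CoreSection
noncomputable section FinalSection

open ComplexConjugate

lemma bpf_Mc_B_mem (jb : ℝ → ℝ)
    (B : Lp ℂ 2 (volume : Measure (V2 × ℝ)) →ₗᵢ[ℂ]
      Lp ℂ 2 (volume : Measure ((V2 × V2) × ℝ)))
    (hB : ∀ (u : V2 × ℝ → ℂ), Continuous u → HasCompactSupport u →
      ∀ hu2 : MemLp u 2 (volume : Measure (V2 × ℝ)),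
        ⇑(B (hu2.toLp u)) =ᵐ[volume] pB jb u)
    (S : Set ℝ) (hS : MeasurableSet S)
    (x : Lp ℂ 2 (volume : Measure (V2 × ℝ))) :
    bpfMc S hS (B x) ∈ (LinearMap.range B.toLinearMap).topologicalClosure := by
  set K := (LinearMap.range B.toLinearMap).topologicalClosure with hK
  haveI : CompleteSpace K :=
    (LinearMap.range B.toLinearMap).isClosed_topologicalClosure.completeSpace_coe
  rw [← Submodule.orthogonal_orthogonal K]
  rw [Submodule.mem_orthogonal]
  intro y hy
  have hy' : ∀ x' : Lp ℂ 2 (volume : Measure (V2 × ℝ)), (inner ℂ (B x') y : ℂ) = 0 := by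
    intro x'
    have hmem : B x' ∈ K := Submodule.le_topologicalClosure _ ⟨x', rfl⟩
    exact (Submodule.mem_orthogonal K y).mp hy _ hmem
  have bound : ∀ ε : ℝ, 0 < ε → ‖(inner ℂ y (bpfMc S hS (B x)) : ℂ)‖ ≤ ‖y‖ * ε := by
    intro ε hε
    obtain ⟨g', hg'supp, hg'norm, hg'cont, hg'mem⟩ :=
      (Lp.memLp x).exists_hasCompactSupport_eLpNorm_sub_le (μ := volume) (p := 2)
        (by norm_num) (ENNReal.ofReal_pos.mpr hε).ne'
    set gLp := hg'mem.toLp g' with hgLp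
    have hdiff : ‖x - gLp‖ ≤ ε := by
      rw [Lp.norm_def]
      have hae : ⇑(x - gLp) =ᵐ[volume] (⇑x - g') := by
        filter_upwards [Lp.coeFn_sub x gLp, hg'mem.coeFn_toLp] with q h1 h2
        rw [h1]
        simp [hgLp, h2]
      rw [eLpNorm_congr_ae hae]
      calc (eLpNorm (⇑x - g') 2 volume).toReal
          ≤ (ENNReal.ofReal ε).toReal := ENNReal.toReal_mono ENNReal.ofReal_ne_top hg'norm
        _ = ε := ENNReal.toReal_ofReal hε.le
    have hcore : (inner ℂ y (bpfMc S hS (B gLp)) : ℂ) = 0 :=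
      bpf_core jb B hB S hS y hy' g' hg'cont hg'supp hg'mem
    calc ‖(inner ℂ y (bpfMc S hS (B x)) : ℂ)‖
        = ‖(inner ℂ y (bpfMc S hS (B x)) : ℂ) - (inner ℂ y (bpfMc S hS (B gLp)) : ℂ)‖ := by
          rw [hcore, sub_zero]
      _ = ‖(inner ℂ y (bpfMc S hS (B x) - bpfMc S hS (B gLp)) : ℂ)‖ := by
          rw [inner_sub_right]
      _ = ‖(inner ℂ y (bpfMc S hS (B (x - gLp))) : ℂ)‖ := by
          rw [← bpfMc_sub, ← map_sub]
      _ ≤ ‖y‖ * ‖bpfMc S hS (B (x - gLp))‖ := norm_inner_le_norm _ _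
      _ ≤ ‖y‖ * ‖B (x - gLp)‖ := by
          exact mul_le_mul_of_nonneg_left (bpfMc_norm_le S hS _) (norm_nonneg _)
      _ = ‖y‖ * ‖x - gLp‖ := by rw [B.norm_map]
      _ ≤ ‖y‖ * ε := mul_le_mul_of_nonneg_left hdiff (norm_nonneg _)
  have hnorm0 : ‖(inner ℂ y (bpfMc S hS (B x)) : ℂ)‖ ≤ 0 := by
    apply le_of_forall_pos_le_add
    intro ε hε
    rw [zero_add]
    have h1 := bound (ε / (‖y‖ + 1)) (by positivity)
    calc ‖(inner ℂ y (bpfMc S hS (B x)) : ℂ)‖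
        ≤ ‖y‖ * (ε / (‖y‖ + 1)) := h1
      _ ≤ (‖y‖ + 1) * (ε / (‖y‖ + 1)) := by
          gcongr
          linarith
      _ = ε := by field_simp
  have : ‖(inner ℂ y (bpfMc S hS (B x)) : ℂ)‖ = 0 := le_antisymm hnorm0 (norm_nonneg _)
  exact norm_eq_zero.mp this

end FinalSection
noncomputable section TheoremSection

theorem bargmann_projector_fiberwise'
    (jb : ℝ → ℝ)
    (B : Lp ℂ 2 (volume : Measure (V2 × ℝ)) →ₗᵢ[ℂ]
      Lp ℂ 2 (volume : Measure ((V2 × V2) × ℝ)))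
    (hB : ∀ (u : V2 × ℝ → ℂ), Continuous u → HasCompactSupport u →
      ∀ hu2 : MemLp u 2 (volume : Measure (V2 × ℝ)),
        ⇑(B (hu2.toLp u)) =ᵐ[volume] pB jb u)
    (v : Lp ℂ 2 (volume : Measure ((V2 × V2) × ℝ)))
    (S : Set ℝ) (hS : MeasurableSet S)
    (hv : ∀ᵐ p : (V2 × V2) × ℝ ∂volume, p.2 ∉ S → v p = 0) :
    ∀ᵐ p : (V2 × V2) × ℝ ∂volume, p.2 ∉ S →
      ⇑((B.toContinuousLinearMap ∘L
          ContinuousLinearMap.adjoint B.toContinuousLinearMap) v) p = 0 := by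
  set Bclm := B.toContinuousLinearMap with hBclm
  set Pv := (Bclm ∘L ContinuousLinearMap.adjoint Bclm) v with hPv
  have hPvB : Pv = B ((ContinuousLinearMap.adjoint Bclm) v) := rfl
  set K := (LinearMap.range B.toLinearMap).topologicalClosure with hK
  set w := bpfMc S hS Pv with hw
  have hwK : w ∈ K := by
    rw [hw, hPvB]
    exact bpf_Mc_B_mem jb B hB S hS _
  -- on the closure of the range, the projector acts like the identity in pairings with v
  have C1 : ∀ z' ∈ K, (inner ℂ Pv z' : ℂ) = inner ℂ v z' := by
    have hsub : (K : Set (Lp ℂ 2 (volume : Measure ((V2 × V2) × ℝ))))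
        ⊆ {z' | (inner ℂ Pv z' : ℂ) = inner ℂ v z'} := by
      rw [hK, Submodule.topologicalClosure_coe]
      apply closure_minimal
      · rintro _ ⟨x₁, rfl⟩
        show (inner ℂ Pv (B x₁) : ℂ) = inner ℂ v (B x₁)
        have h1 : (inner ℂ Pv (B x₁) : ℂ) = inner ℂ ((ContinuousLinearMap.adjoint Bclm) v) x₁ := by
          rw [hPvB]
          exact B.inner_map_map _ _
        rw [h1, ContinuousLinearMap.adjoint_inner_left]
        rfl
      · apply isClosed_eq
        · exact Continuous.inner continuous_const continuous_id
        · exact Continuous.inner continuous_const continuous_id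
    intro z' hz'
    exact hsub hz'
  -- the data vanishes on the bad band
  have hMcv : bpfMc S hS v = 0 := by
    apply Lp.ext
    filter_upwards [bpfMc_coe S hS v, hv, Lp.coeFn_zero ℂ 2 (volume : Measure ((V2 × V2) × ℝ))]
      with p h1 h2 h3
    rw [h1, h3]
    by_cases h : p ∈ bpfBand S
    · rw [Set.indicator_of_mem h]
      exact h2 h
    · rw [Set.indicator_of_notMem h]
      rfl
  -- conclude `w = 0`
  have hww : (inner ℂ w w : ℂ) = 0 := by
    have e1 : (inner ℂ w w : ℂ) = inner ℂ Pv (bpfMc S hS w) := bpfMc_inner_symm S hS Pv w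
    rw [e1, hw, bpfMc_idem, ← hw]
    rw [C1 w hwK]
    have e2 : (inner ℂ v w : ℂ) = inner ℂ (bpfMc S hS v) Pv := by
      rw [hw]
      exact (bpfMc_inner_symm S hS v Pv).symm
    rw [e2, hMcv, inner_zero_left]
  have hw0 : w = 0 := inner_self_eq_zero.mp hww
  have hwcoe : ⇑w =ᵐ[volume] 0 := by
    rw [hw0]
    exact Lp.coeFn_zero ℂ 2 _
  filter_upwards [bpfMc_coe S hS Pv, hwcoe] with p h1 h2
  intro hpS
  have hp : p ∈ bpfBand S := hpS
  have : (bpfBand S).indicator (⇑Pv) p = 0 := by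
    rw [← h1]
    exact h2
  rw [Set.indicator_of_mem hp] at this
  exact this


end TheoremSection

noncomputable section

/-- The projector `𝔓 := 𝔅 ∘ 𝔅*` acts fiberwise in `η`: if `v ∈ L²(ℝ⁵)`
vanishes almost everywhere on `{(w,ξ,η) : η ∉ S}` for a measurable `S ⊆ ℝ`, then so does
`𝔓v`. -/
theorem bargmann_projector_fiberwise
    (jb : ℝ → ℝ) (hjb_cont : Continuous jb)
    (hjb_eq : ∀ s : ℝ, 2 ≤ |s| → jb s = |s|)
    (hjb_one : ∀ s : ℝ, 1 ≤ jb s)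
    (B : Lp ℂ 2 (volume : Measure (V2 × ℝ)) →ₗᵢ[ℂ]
      Lp ℂ 2 (volume : Measure ((V2 × V2) × ℝ)))
    (hB : ∀ (u : V2 × ℝ → ℂ), Continuous u → HasCompactSupport u →
      ∀ hu2 : MemLp u 2 (volume : Measure (V2 × ℝ)),
        ⇑(B (hu2.toLp u)) =ᵐ[volume] pB jb u)
    (v : Lp ℂ 2 (volume : Measure ((V2 × V2) × ℝ)))
    (S : Set ℝ) (hS : MeasurableSet S)
    (hv : ∀ᵐ p : (V2 × V2) × ℝ ∂volume, p.2 ∉ S → v p = 0) :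
    ∀ᵐ p : (V2 × V2) × ℝ ∂volume, p.2 ∉ S →
      ⇑((B.toContinuousLinearMap ∘L
          ContinuousLinearMap.adjoint B.toContinuousLinearMap) v) p = 0 :=
  bargmann_projector_fiberwise' jb B hB v S hS hv

end
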